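/- Consider the Facility Location instance P constructed from a BHM instance (n, M, x, w) with opening cost f = 2. If x_i ⊕ x_j ≠ w_{i,j} for every pair (i, j) ∈ M (the NO case), then the optimal Uniform Facility Location cost of P equals n·(3f + √2) = n·(6 + √2). -/

import Mathlib

/-- The ambient Euclidean space `ℝ^{8n}`: each index `i ∈ {1, …, 2n}` owns the
four coordinates `(i, 0), (i, 1), (i, 2), (i, 3)`. -/
abbrev bhmSpace (n : ℕ) := EuclideanSpace ℝ (Fin (2 * n) × Fin 4)

/-- The 0/1 vector with 1s exactly in the pair of coordinates
`(i, 0), (i, 1)` (if `b = false`) or `(i, 2), (i, 3)` (if `b = true`). -/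
noncomputable def onesPair (n : ℕ) (i : Fin (2 * n)) (b : Bool) : bhmSpace n :=
  WithLp.toLp 2 (fun q => if q.1 = i ∧ (b = true ↔ 2 ≤ (q.2 : ℕ)) then 1 else 0)

/-- The multiset of clients of the Facility Location instance built from a BHM
instance: `100n` copies of `s_i^{x_i} = onesPair n i (x i)` for each
`i ∈ {1, …, 2n}`, plus, for each matching edge `k` joining `(e k).1` to
`(e k).2` with bit `w k`, one copy of
`t⁰ = onesPair n (e k).1 false + onesPair n (e k).2 (!(w k))` and one copy of
`t¹ = onesPair n (e k).1 true + onesPair n (e k).2 (w k)`. -/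
noncomputable def bhmClients (n : ℕ) (x : Fin (2 * n) → Bool)
    (e : Fin n → Fin (2 * n) × Fin (2 * n)) (w : Fin n → Bool) :
    Multiset (bhmSpace n) :=
  (Finset.univ : Finset (Fin (2 * n))).val.bind
      (fun i => Multiset.replicate (100 * n) (onesPair n i (x i)))
    + (Finset.univ : Finset (Fin n)).val.bind
      (fun k => {onesPair n (e k).1 false + onesPair n (e k).2 (!(w k)),
                 onesPair n (e k).1 true + onesPair n (e k).2 (w k)})

/-- The Uniform Facility Location cost (with multiplicity) of opening the
nonempty finite facility set `F` for the BHM instance, with opening cost `f`. -/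
noncomputable def bhmCost (n : ℕ) (x : Fin (2 * n) → Bool)
    (e : Fin n → Fin (2 * n) × Fin (2 * n)) (w : Fin n → Bool)
    (f : ℝ) (F : Finset (bhmSpace n)) : ℝ :=
  ((bhmClients n x e w).map (fun p => Metric.infDist p (F : Set (bhmSpace n)))).sum
    + f * F.card

/-- The optimal Uniform Facility Location cost of the BHM instance. -/
noncomputable def bhmOPT (n : ℕ) (x : Fin (2 * n) → Bool)
    (e : Fin n → Fin (2 * n) × Fin (2 * n)) (w : Fin n → Bool) (f : ℝ) : ℝ :=
  sInf {c : ℝ | ∃ F : Finset (bhmSpace n), F.Nonempty ∧ c = bhmCost n x e w f F}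

/-! ### Auxiliary material -/

lemma inner_onesPair (n : ℕ) (i i' : Fin (2 * n)) (b b' : Bool) :
    (inner ℝ (onesPair n i b) (onesPair n i' b') : ℝ)
      = if i = i' ∧ b = b' then 2 else 0 := by
  rw [PiLp.inner_apply]
  simp only [RCLike.inner_apply, starRingEnd_apply, star_trivial]
  rw [Fintype.sum_prod_type]
  rw [Finset.sum_eq_single i]
  · by_cases hii : i = i'
    · subst hii
      unfold onesPair
      cases b <;> cases b' <;>
        norm_num [PiLp.toLp_apply, Fin.sum_univ_four, show ((3:Fin 4):ℕ)=3 from rfl,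
          show ((2:Fin 4):ℕ)=2 from rfl, show ((1:Fin 4):ℕ)=1 from rfl,
          show ((0:Fin 4):ℕ)=0 from rfl]
    · unfold onesPair
      simp [PiLp.toLp_apply, hii]
  · intro a _ ha
    unfold onesPair
    simp [PiLp.toLp_apply, ha]
  · simp

variable {n : ℕ}

lemma dist_sqrt_inner (p q : bhmSpace n) :
    dist p q = Real.sqrt (inner ℝ (p - q) (p - q) : ℝ) := by
  rw [dist_eq_norm, ← Real.sqrt_sq (norm_nonneg (p - q)), ← real_inner_self_eq_norm_sq]

lemma norm_onesPair (i : Fin (2*n)) (b : Bool) : ‖onesPair n i b‖ = Real.sqrt 2 := by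
  rw [← Real.sqrt_sq (norm_nonneg _), ← real_inner_self_eq_norm_sq, inner_onesPair]
  simp

lemma dist_uu {i i' : Fin (2*n)} {b b' : Bool} (h : ¬(i = i' ∧ b = b')) :
    dist (onesPair n i b) (onesPair n i' b') = 2 := by
  have h' : ¬(i' = i ∧ b' = b) := fun hc => h ⟨hc.1.symm, hc.2.symm⟩
  rw [dist_sqrt_inner]
  simp only [inner_sub_left, inner_sub_right, inner_onesPair]
  rw [if_neg h, if_neg h']
  norm_num

lemma dist_three {i1 i2 i3 : Fin (2*n)} {b1 b2 b3 : Bool}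
    (h12 : ¬(i1 = i2 ∧ b1 = b2)) (h13 : ¬(i1 = i3 ∧ b1 = b3))
    (h23 : ¬(i2 = i3 ∧ b2 = b3)) :
    dist (onesPair n i1 b1 + onesPair n i2 b2) (onesPair n i3 b3) = Real.sqrt 6 := by
  have h21 : ¬(i2 = i1 ∧ b2 = b1) := fun hc => h12 ⟨hc.1.symm, hc.2.symm⟩
  have h31 : ¬(i3 = i1 ∧ b3 = b1) := fun hc => h13 ⟨hc.1.symm, hc.2.symm⟩
  have h32 : ¬(i3 = i2 ∧ b3 = b2) := fun hc => h23 ⟨hc.1.symm, hc.2.symm⟩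
  rw [dist_sqrt_inner]
  simp only [inner_sub_left, inner_sub_right, inner_add_left, inner_add_right, inner_onesPair]
  rw [if_neg h12, if_neg h13, if_neg h23, if_neg h21, if_neg h31, if_neg h32]
  simp
  norm_num

lemma distsq_four {i1 i2 i3 i4 : Fin (2*n)} {b1 b2 b3 b4 : Bool}
    (h12 : ¬(i1 = i2 ∧ b1 = b2)) (h13 : ¬(i1 = i3 ∧ b1 = b3))
    (h14 : ¬(i1 = i4 ∧ b1 = b4)) (h23 : ¬(i2 = i3 ∧ b2 = b3))
    (h24 : ¬(i2 = i4 ∧ b2 = b4)) (h34 : ¬(i3 = i4 ∧ b3 = b4)) :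
    dist (onesPair n i1 b1 + onesPair n i2 b2) (onesPair n i3 b3 + onesPair n i4 b4) ^ 2 = 8 := by
  have h21 : ¬(i2 = i1 ∧ b2 = b1) := fun hc => h12 ⟨hc.1.symm, hc.2.symm⟩
  have h31 : ¬(i3 = i1 ∧ b3 = b1) := fun hc => h13 ⟨hc.1.symm, hc.2.symm⟩
  have h41 : ¬(i4 = i1 ∧ b4 = b1) := fun hc => h14 ⟨hc.1.symm, hc.2.symm⟩
  have h32 : ¬(i3 = i2 ∧ b3 = b2) := fun hc => h23 ⟨hc.1.symm, hc.2.symm⟩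
  have h42 : ¬(i4 = i2 ∧ b4 = b2) := fun hc => h24 ⟨hc.1.symm, hc.2.symm⟩
  have h43 : ¬(i4 = i3 ∧ b4 = b3) := fun hc => h34 ⟨hc.1.symm, hc.2.symm⟩
  rw [dist_sqrt_inner, Real.sq_sqrt real_inner_self_nonneg]
  simp only [inner_sub_left, inner_sub_right, inner_add_left, inner_add_right, inner_onesPair]
  rw [if_neg h12, if_neg h13, if_neg h14, if_neg h23, if_neg h24, if_neg h34,
    if_neg h21, if_neg h31, if_neg h41, if_neg h32, if_neg h42, if_neg h43]
  norm_num [inner_onesPair]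

open Finset in
lemma packing {E : Type*} [NormedAddCommGroup E] [InnerProductSpace ℝ E]
    {ι : Type*} [Fintype ι] (p : ι → E) (β : ι → ℝ) (hβ : ∀ j, β j ≤ 2)
    (hp : ∀ j l, j ≠ l → 8 ≤ dist (p j) (p l) ^ 2) (q : E) :
    ∑ j, max (β j - dist (p j) q) 0 ≤ 2 := by
  classical
  have step1 : ∑ j, max (β j - dist (p j) q) 0 ≤ ∑ j, max (2 - dist (p j) q) 0 :=
    Finset.sum_le_sum fun j _ => max_le_max (by linarith [hβ j]) le_rfl
  refine step1.trans ?_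
  set d : ι → ℝ := fun j => dist (p j) q with hd
  set S : Finset ι := Finset.univ.filter (fun j => d j < 2) with hS
  have hdS : ∀ j ∈ S, d j < 2 := fun j hj => (Finset.mem_filter.mp hj).2
  have hdnn : ∀ j, 0 ≤ d j := fun j => dist_nonneg
  have hsplit : ∑ j, max (2 - d j) 0 = ∑ j ∈ S, (2 - d j) := by
    rw [← Finset.sum_filter_add_sum_filter_not Finset.univ (fun j => d j < 2)]
    have h2 : ∑ j ∈ Finset.univ.filter (fun j => ¬ d j < 2), max (2 - d j) 0 = 0 :=
      Finset.sum_eq_zero fun j hj => by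
        simp only [Finset.mem_filter] at hj
        have : 2 - d j ≤ 0 := by linarith [not_lt.mp hj.2]
        simp [max_eq_right this]
    rw [h2, add_zero]
    exact Finset.sum_congr rfl fun j hj => max_eq_left (by linarith [hdS j hj])
  rw [hsplit]
  rcases S.eq_empty_or_nonempty with hSe | hSne
  · simp [hSe]
  · set m : ℕ := S.card with hm
    have hm1 : 1 ≤ (m:ℝ) := by exact_mod_cast Finset.card_pos.mpr hSne
    set v : ι → E := fun j => q - p j with hv
    have h1 : ∀ j l : ι, ‖v j - v l‖ ^ 2
        = ‖v j‖ ^ 2 + ‖v l‖ ^ 2 - 2 * inner ℝ (v j) (v l) := by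
      intro j l; rw [@norm_sub_sq_real]; ring
    have e1 : ∀ j : ι, ∑ l ∈ S, ‖v j - v l‖ ^ 2
        = (m:ℝ) * ‖v j‖ ^ 2 + (∑ l ∈ S, ‖v l‖ ^ 2)
          - 2 * inner ℝ (v j) (∑ l ∈ S, v l) := by
      intro j
      rw [inner_sum, Finset.mul_sum]
      simp only [h1]
      rw [Finset.sum_sub_distrib, Finset.sum_add_distrib, Finset.sum_const, nsmul_eq_mul]
    have expand : ∑ j ∈ S, ∑ l ∈ S, ‖v j - v l‖ ^ 2
        = 2 * (m:ℝ) * ∑ j ∈ S, ‖v j‖ ^ 2 - 2 * ‖∑ j ∈ S, v j‖ ^ 2 := by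
      simp only [e1]
      rw [Finset.sum_sub_distrib, Finset.sum_add_distrib, Finset.sum_const, nsmul_eq_mul,
        ← Finset.mul_sum, ← Finset.mul_sum, ← sum_inner, real_inner_self_eq_norm_sq]
      ring
    have hvlow : ∀ j ∈ S, ∀ l ∈ S, j ≠ l → 8 ≤ ‖v j - v l‖ ^ 2 := by
      intro j _ l _ hjl
      have hvv : v j - v l = p l - p j := by simp only [hv]; abel
      rw [hvv, ← dist_eq_norm]
      exact hp l j (Ne.symm hjl)
    have low : 8 * ((m:ℝ) * ((m:ℝ) - 1)) ≤ ∑ j ∈ S, ∑ l ∈ S, ‖v j - v l‖ ^ 2 := by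
      have inner_low : ∀ j ∈ S, 8 * ((m:ℝ) - 1) ≤ ∑ l ∈ S, ‖v j - v l‖ ^ 2 := by
        intro j hj
        have hle : ∑ l ∈ S, (if j = l then (0:ℝ) else 8) ≤ ∑ l ∈ S, ‖v j - v l‖ ^ 2 :=
          Finset.sum_le_sum fun l hl => by
            by_cases h : j = l
            · simp only [h, if_pos rfl]; positivity
            · rw [if_neg h]; exact hvlow j hj l hl h
        refine le_trans (le_of_eq ?_) hle
        have hrw : ∑ l ∈ S, (if j = l then (0:ℝ) else 8)
            = ∑ l ∈ S, ((8:ℝ) - if j = l then 8 else 0) :=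
          Finset.sum_congr rfl fun l _ => by split <;> ring
        rw [hrw, Finset.sum_sub_distrib, Finset.sum_const, Finset.sum_ite_eq, if_pos hj,
          nsmul_eq_mul]
        ring
      calc 8 * ((m:ℝ) * ((m:ℝ) - 1)) = ∑ _j ∈ S, 8 * ((m:ℝ) - 1) := by
            rw [Finset.sum_const, nsmul_eq_mul]; ring
        _ ≤ _ := Finset.sum_le_sum inner_low
    have sumsq : 4 * ((m:ℝ) - 1) ≤ ∑ j ∈ S, ‖v j‖ ^ 2 := by
      have hns : (0:ℝ) ≤ ‖∑ j ∈ S, v j‖ ^ 2 := by positivity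
      nlinarith [low, expand]
    have hnv : ∀ j, ‖v j‖ = d j := fun j => by
      rw [hv, norm_sub_rev, ← dist_eq_norm]
    have sumd : 2 * ((m:ℝ) - 1) ≤ ∑ j ∈ S, d j := by
      have : ∑ j ∈ S, ‖v j‖ ^ 2 ≤ ∑ j ∈ S, 2 * d j :=
        Finset.sum_le_sum fun j hj => by
          rw [hnv j]; nlinarith [hdS j hj, hdnn j]
      rw [← Finset.mul_sum] at this
      linarith
    rw [Finset.sum_sub_distrib, Finset.sum_const, nsmul_eq_mul]
    linarith

lemma dual_bound {E : Type*} [MetricSpace E]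
    {C : Type*} [Fintype C] (pt : C → E) (wt α : C → ℝ)
    (hwt : ∀ c, 0 ≤ wt c) (f : ℝ)
    (hdual : ∀ q : E, ∑ c, wt c * max (α c - dist (pt c) q) 0 ≤ f)
    (F : Finset E) (hF : F.Nonempty) :
    ∑ c, wt c * α c ≤ (∑ c, wt c * Metric.infDist (pt c) (F : Set E)) + f * F.card := by
  classical
  have hsel : ∀ c : C, ∃ qc ∈ F, ∀ y ∈ F, dist (pt c) qc ≤ dist (pt c) y := by
    intro c
    obtain ⟨qc, hqc, hmin⟩ := F.exists_min_image (fun y => dist (pt c) y) hF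
    exact ⟨qc, hqc, hmin⟩
  choose qc hqF hqmin using hsel
  have hinf : ∀ c, Metric.infDist (pt c) (F : Set E) = dist (pt c) (qc c) := by
    intro c
    apply le_antisymm (Metric.infDist_le_dist_of_mem (by exact_mod_cast hqF c))
    by_contra hlt
    push_neg at hlt
    obtain ⟨y, hy, hdy⟩ := (Metric.infDist_lt_iff ⟨qc c, by exact_mod_cast hqF c⟩).mp hlt
    exact absurd (hqmin c y (by exact_mod_cast hy)) (by linarith)
  have key : ∀ c, wt c * α c ≤ wt c * Metric.infDist (pt c) (F : Set E)
      + wt c * max (α c - dist (pt c) (qc c)) 0 := by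
    intro c
    rw [hinf c, ← mul_add]
    apply mul_le_mul_of_nonneg_left _ (hwt c)
    have := le_max_left (α c - dist (pt c) (qc c)) 0
    linarith
  calc ∑ c, wt c * α c
      ≤ ∑ c, (wt c * Metric.infDist (pt c) (F : Set E)
          + wt c * max (α c - dist (pt c) (qc c)) 0) := Finset.sum_le_sum fun c _ => key c
    _ = (∑ c, wt c * Metric.infDist (pt c) (F : Set E))
          + ∑ c, wt c * max (α c - dist (pt c) (qc c)) 0 := Finset.sum_add_distrib
    _ ≤ (∑ c, wt c * Metric.infDist (pt c) (F : Set E)) + f * F.card := by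
        refine add_le_add le_rfl ?_
        calc ∑ c, wt c * max (α c - dist (pt c) (qc c)) 0
            ≤ ∑ c, ∑ q ∈ F, wt c * max (α c - dist (pt c) q) 0 :=
              Finset.sum_le_sum fun c _ =>
                Finset.single_le_sum (f := fun q => wt c * max (α c - dist (pt c) q) 0)
                  (fun q _ => mul_nonneg (hwt c) (le_max_right _ _)) (hqF c)
          _ = ∑ q ∈ F, ∑ c, wt c * max (α c - dist (pt c) q) 0 := Finset.sum_comm
          _ ≤ ∑ q ∈ F, f := Finset.sum_le_sum fun q _ => hdual q
          _ = f * F.card := by rw [Finset.sum_const, nsmul_eq_mul, mul_comm]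
noncomputable def gpt (n : ℕ) (x : Fin (2 * n) → Bool)
    (e : Fin n → Fin (2 * n) × Fin (2 * n)) (k : Fin n) : bhmSpace n :=
  onesPair n (e k).1 (x (e k).1) + onesPair n (e k).2 (x (e k).2)

noncomputable def bpt (n : ℕ) (x : Fin (2 * n) → Bool)
    (e : Fin n → Fin (2 * n) × Fin (2 * n)) (k : Fin n) : bhmSpace n :=
  onesPair n (e k).1 (!(x (e k).1)) + onesPair n (e k).2 (!(x (e k).2))

lemma bhmCost_eq (n : ℕ) (x : Fin (2 * n) → Bool)
    (e : Fin n → Fin (2 * n) × Fin (2 * n)) (w : Fin n → Bool)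
    (hno : ∀ k, Bool.xor (x (e k).1) (x (e k).2) ≠ w k)
    (f : ℝ) (F : Finset (bhmSpace n)) :
    bhmCost n x e w f F
      = (∑ i, ((100 * n : ℕ) : ℝ) * Metric.infDist (onesPair n i (x i)) (F : Set (bhmSpace n)))
        + (∑ k, (Metric.infDist (gpt n x e k) (F : Set (bhmSpace n))
            + Metric.infDist (bpt n x e k) (F : Set (bhmSpace n))))
        + f * F.card := by
  unfold bhmCost bhmClients
  rw [Multiset.map_add, Multiset.sum_add]
  congr 1
  congr 1
  · rw [Multiset.map_bind, Multiset.sum_bind]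
    show ∑ i, (Multiset.map _ (Multiset.replicate (100*n) _)).sum = _
    refine Finset.sum_congr rfl fun i _ => ?_
    rw [Multiset.map_replicate, Multiset.sum_replicate, nsmul_eq_mul]
  · rw [Multiset.map_bind, Multiset.sum_bind]
    show ∑ k, (Multiset.map _ _).sum = _
    refine Finset.sum_congr rfl fun k _ => ?_
    have hpair : ({onesPair n (e k).1 false + onesPair n (e k).2 (!(w k)),
        onesPair n (e k).1 true + onesPair n (e k).2 (w k)} : Multiset (bhmSpace n)).map
          (fun p => Metric.infDist p (F : Set (bhmSpace n)))
        = {Metric.infDist (onesPair n (e k).1 false + onesPair n (e k).2 (!(w k))) (F : Set (bhmSpace n)),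
           Metric.infDist (onesPair n (e k).1 true + onesPair n (e k).2 (w k)) (F : Set (bhmSpace n))} := by
      simp [Multiset.insert_eq_cons]
    rw [hpair]
    have hs : ∀ a b : ℝ, ({a, b} : Multiset ℝ).sum = a + b := by
      intro a b; simp [Multiset.insert_eq_cons]
    rw [hs]
    have h := hno k
    unfold gpt bpt
    cases hx1 : x (e k).1 <;> cases hx2 : x (e k).2 <;> cases hw : w k <;>
      simp_all <;> ring
lemma sqrt2_le_two : Real.sqrt 2 ≤ 2 := by
  nlinarith [Real.sq_sqrt (show (0:ℝ) ≤ 2 by norm_num), Real.sqrt_nonneg 2]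

lemma sqrt6_facts : 2 + (1:ℝ)/50 ≤ Real.sqrt 6 ∧ Real.sqrt 2 + (1:ℝ)/50 ≤ Real.sqrt 6 := by
  have h6 := Real.sq_sqrt (show (0:ℝ) ≤ 6 by norm_num)
  have h2 := Real.sq_sqrt (show (0:ℝ) ≤ 2 by norm_num)
  have n6 := Real.sqrt_nonneg 6
  have n2 := Real.sqrt_nonneg 2
  have h6l : (2.4:ℝ) ≤ Real.sqrt 6 := by
    nlinarith [mul_pos (show (0:ℝ) < Real.sqrt 6 + 2.4 by linarith) (show (0:ℝ) < Real.sqrt 6 + 2.4 by linarith)]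
  have h2u : Real.sqrt 2 ≤ 1.5 := by nlinarith [sq_nonneg (Real.sqrt 2 - 1.5)]
  constructor
  · linarith
  · linarith

lemma demand (n : ℕ) (hn : 1 ≤ n) (x : Fin (2 * n) → Bool)
    (e : Fin n → Fin (2 * n) × Fin (2 * n))
    (hinj : Function.Injective
      (fun q : Fin n × Bool => if q.2 then (e q.1).2 else (e q.1).1))
    (q : bhmSpace n) :
    (∑ i, ((100 * n : ℕ) : ℝ) * max (1/(50*(n:ℝ)) - dist (onesPair n i (x i)) q) 0)
      + (∑ k, (max (Real.sqrt 2 - dist (gpt n x e k) q) 0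
          + max ((2:ℝ) - dist (bpt n x e k) q) 0)) ≤ 2 := by
  classical
  set a : ℝ := 1/(50*(n:ℝ)) with ha
  have hn0 : (0:ℝ) < (n:ℝ) := by exact_mod_cast hn
  have hn1 : (1:ℝ) ≤ (n:ℝ) := by exact_mod_cast hn
  have ha_pos : 0 < a := by positivity
  have ha_le : a ≤ 1/50 := by
    rw [ha]; rw [div_le_div_iff₀ (by positivity) (by norm_num)]; nlinarith
  have hne : ∀ k : Fin n, (e k).1 ≠ (e k).2 := by
    intro k h
    have := hinj (a₁ := (k, false)) (a₂ := (k, true)) (by simpa using h)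
    simp at this
  -- endpoint distinctness across distinct (k,b)
  have hend : ∀ (k l : Fin n) (b c : Bool), (k, b) ≠ (l, c) →
      (if b then (e k).2 else (e k).1) ≠ (if c then (e l).2 else (e l).1) := by
    intro k l b c hkl h
    exact hkl (hinj (a₁ := (k,b)) (a₂ := (l,c)) h)
  by_cases hA : ∀ i, a ≤ dist (onesPair n i (x i)) q
  · -- Case A: heavy terms vanish; use packing
    have hheavy : (∑ i, ((100 * n : ℕ) : ℝ) * max (a - dist (onesPair n i (x i)) q) 0) = 0 :=
      Finset.sum_eq_zero fun i _ => by
        rw [max_eq_right (by linarith [hA i])]; ring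
    rw [hheavy, zero_add]
    set p : Fin n × Bool → bhmSpace n := fun j => cond j.2 (bpt n x e j.1) (gpt n x e j.1) with hp
    set β : Fin n × Bool → ℝ := fun j => cond j.2 2 (Real.sqrt 2) with hβdef
    have hβ : ∀ j, β j ≤ 2 := by
      rintro ⟨k, (_|_)⟩ <;> simp [hβdef, sqrt2_le_two]
    have hgb : ∀ k : Fin n, dist (gpt n x e k) (bpt n x e k) ^ 2 = 8 := by
      intro k
      unfold gpt bpt
      exact distsq_four (fun h => hne k h.1)
        (fun h => by simpa using h.2) (fun h => hne k h.1)
        (fun h => hne k h.1.symm) (fun h => by simpa using h.2) (fun h => hne k h.1)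
    have hcross : ∀ (k l : Fin n), k ≠ l → ∀ (b c : Bool),
        dist (p (k, b)) (p (l, c)) ^ 2 = 8 := by
      intro k l hkl b c
      have h11 : (e k).1 ≠ (e l).1 := hend k l false false (by simp [hkl])
      have h12 : (e k).1 ≠ (e l).2 := hend k l false true (by simp [hkl])
      have h21 : (e k).2 ≠ (e l).1 := hend k l true false (by simp [hkl])
      have h22 : (e k).2 ≠ (e l).2 := hend k l true true (by simp [hkl])
      have hk12 := hne k
      have hl12 := hne l
      cases b <;> cases c <;>
        · simp only [hp, cond_true, cond_false]
          simp only [gpt, bpt]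
          exact distsq_four (fun h => hk12 h.1) (fun h => h11 h.1) (fun h => h12 h.1)
            (fun h => h21 h.1) (fun h => h22 h.1) (fun h => hl12 h.1)
    have hpdist : ∀ j l : Fin n × Bool, j ≠ l → 8 ≤ dist (p j) (p l) ^ 2 := by
      rintro ⟨k, b⟩ ⟨l, c⟩ hjl
      by_cases hkl : k = l
      · subst hkl
        have hbc : b ≠ c := fun h => hjl (by rw [h])
        cases b <;> cases c <;> simp_all [hp, cond_true, cond_false]
        · rw [dist_comm]; exact le_of_eq (hgb k).symm
      · exact le_of_eq (hcross k l hkl b c).symm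
    have hpack := packing p β hβ hpdist q
    rw [Fintype.sum_prod_type] at hpack
    simp only [Fintype.sum_bool, hp, hβdef, cond_true, cond_false] at hpack
    calc ∑ k, (max (Real.sqrt 2 - dist (gpt n x e k) q) 0
            + max ((2:ℝ) - dist (bpt n x e k) q) 0)
        = ∑ k, (max ((2:ℝ) - dist (bpt n x e k) q) 0
            + max (Real.sqrt 2 - dist (gpt n x e k) q) 0) :=
          Finset.sum_congr rfl fun k _ => add_comm _ _
      _ ≤ 2 := hpack
  · -- Case B: some heavy point is close to q
    push_neg at hA
    obtain ⟨i0, hri0⟩ := hA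
    set r : ℝ := dist (onesPair n i0 (x i0)) q with hrdef
    have hr0 : 0 ≤ r := dist_nonneg
    have hr50 : r < 1/50 := lt_of_lt_of_le hri0 ha_le
    -- heavy sum equals the i0 term
    have hheavy : (∑ i, ((100 * n : ℕ) : ℝ) * max (a - dist (onesPair n i (x i)) q) 0)
        = ((100 * n : ℕ) : ℝ) * (a - r) := by
      rw [Finset.sum_eq_single i0]
      · rw [max_eq_left (by linarith)]
      · intro i _ hi
        have hd2 : dist (onesPair n i (x i)) (onesPair n i0 (x i0)) = 2 :=
          dist_uu (fun h => hi h.1)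
        have htri : (2:ℝ) ≤ dist (onesPair n i (x i)) q + r := by
          rw [← hd2]; exact dist_triangle_right _ _ _
        rw [max_eq_right (by linarith)]; ring
      · intro h; exact absurd (Finset.mem_univ i0) h
    rw [hheavy]
    -- bad points contribute 0
    have hbad : ∀ k, max ((2:ℝ) - dist (bpt n x e k) q) 0 = 0 := by
      intro k
      have hd6 : dist (bpt n x e k) (onesPair n i0 (x i0)) = Real.sqrt 6 := by
        unfold bpt
        refine dist_three (fun h => hne k h.1) ?_ ?_
        · rintro ⟨h1, h2⟩; rw [h1] at h2; simp at h2
        · rintro ⟨h1, h2⟩; rw [h1] at h2; simp at h2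
      have htri : Real.sqrt 6 ≤ dist (bpt n x e k) q + r := by
        rw [← hd6]; exact dist_triangle_right _ _ _
      have := sqrt6_facts.1
      exact max_eq_right (by linarith)
    -- good points: at most one contributes, at most r
    have hgood : ∀ k, max (Real.sqrt 2 - dist (gpt n x e k) q) 0
        ≤ (if i0 = (e k).1 ∨ i0 = (e k).2 then r else 0) := by
      intro k
      by_cases hm : i0 = (e k).1 ∨ i0 = (e k).2
      · rw [if_pos hm]
        have hd2 : dist (gpt n x e k) (onesPair n i0 (x i0)) = Real.sqrt 2 := by
          rcases hm with h | h
          · unfold gpt; rw [← h, add_comm, dist_add_self_left, norm_onesPair]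
          · unfold gpt; rw [← h, dist_add_self_left, norm_onesPair]
        have htri : Real.sqrt 2 ≤ dist (gpt n x e k) q + r := by
          rw [← hd2]; exact dist_triangle_right _ _ _
        exact max_le (by linarith) hr0
      · rw [if_neg hm]
        push_neg at hm
        have hd6 : dist (gpt n x e k) (onesPair n i0 (x i0)) = Real.sqrt 6 := by
          unfold gpt
          exact dist_three (fun h => hne k h.1) (fun h => hm.1 h.1.symm)
            (fun h => hm.2 h.1.symm)
        have htri : Real.sqrt 6 ≤ dist (gpt n x e k) q + r := by
          rw [← hd6]; exact dist_triangle_right _ _ _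
        have := sqrt6_facts.2
        exact le_of_eq (max_eq_right (by linarith))
    have hedge : (∑ k, (max (Real.sqrt 2 - dist (gpt n x e k) q) 0
        + max ((2:ℝ) - dist (bpt n x e k) q) 0)) ≤ r := by
      have h1 : (∑ k, (max (Real.sqrt 2 - dist (gpt n x e k) q) 0
          + max ((2:ℝ) - dist (bpt n x e k) q) 0))
          ≤ ∑ k, (if i0 = (e k).1 ∨ i0 = (e k).2 then r else 0) :=
        Finset.sum_le_sum fun k _ => by rw [hbad k, add_zero]; exact hgood k
      refine h1.trans ?_
      rw [Finset.sum_ite, Finset.sum_const, Finset.sum_const_zero, add_zero, nsmul_eq_mul]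
      have hcard : (Finset.univ.filter
          (fun k : Fin n => i0 = (e k).1 ∨ i0 = (e k).2)).card ≤ 1 := by
        rw [Finset.card_le_one]
        intro k hk l hl
        simp only [Finset.mem_filter] at hk hl
        have hb : ∀ m : Fin n, (i0 = (e m).1 ∨ i0 = (e m).2) →
            ∃ b : Bool, (if b then (e m).2 else (e m).1) = i0 := by
          intro m hm
          rcases hm with h | h
          · exact ⟨false, by simp [h.symm]⟩
          · exact ⟨true, by simp [h.symm]⟩
        obtain ⟨b, hbk⟩ := hb k hk.2
        obtain ⟨c, hcl⟩ := hb l hl.2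
        have heq := hinj (a₁ := (k, b)) (a₂ := (l, c)) (by simp only; rw [hbk, hcl])
        exact (Prod.ext_iff.mp heq).1
      calc ((Finset.univ.filter (fun k : Fin n => i0 = (e k).1 ∨ i0 = (e k).2)).card : ℝ) * r
          ≤ 1 * r := by
            apply mul_le_mul_of_nonneg_right _ hr0
            exact_mod_cast hcard
        _ = r := one_mul r
    -- combine
    have hcoef : ((100 * n : ℕ) : ℝ) * a = 2 := by
      rw [ha]; push_cast; field_simp; ring
    have hcoef2 : (1:ℝ) ≤ ((100 * n : ℕ) : ℝ) := by
      push_cast; nlinarith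
    have : ((100 * n : ℕ) : ℝ) * (a - r) = 2 - ((100 * n : ℕ) : ℝ) * r := by
      rw [mul_sub, hcoef]
    rw [this]
    nlinarith [hedge, mul_le_mul_of_nonneg_right hcoef2 hr0]

/-- **NO case.** If `e` describes a perfect matching on
`{1, …, 2n}` and `x_i ⊕ x_j ≠ w_{i,j}` for every edge, then with opening cost
`f = 2` the optimal Uniform Facility Location cost of the instance equals
`n·(3f + √2) = n·(6 + √2)`. -/
theorem stmt_17 (n : ℕ) (hn : 1 ≤ n)
    (x : Fin (2 * n) → Bool) (e : Fin n → Fin (2 * n) × Fin (2 * n))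
    (w : Fin n → Bool)
    (hmatch : Function.Bijective
      (fun q : Fin n × Bool => if q.2 then (e q.1).2 else (e q.1).1))
    (hno : ∀ k, Bool.xor (x (e k).1) (x (e k).2) ≠ w k) :
    bhmOPT n x e w 2 = n * (6 + Real.sqrt 2) := by
  classical
  have hinj := hmatch.1
  have hn1 : (1:ℝ) ≤ (n:ℝ) := by exact_mod_cast hn
  have hn0 : (0:ℝ) < (n:ℝ) := by linarith
  set T : ℝ := (n:ℝ) * (6 + Real.sqrt 2) with hT
  set pt : Fin (2*n) ⊕ (Fin n × Bool) → bhmSpace n :=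
    Sum.elim (fun i => onesPair n i (x i))
      (fun j => cond j.2 (bpt n x e j.1) (gpt n x e j.1)) with hpt
  set wt : Fin (2*n) ⊕ (Fin n × Bool) → ℝ :=
    Sum.elim (fun _ => ((100*n : ℕ):ℝ)) (fun _ => 1) with hwt
  set al : Fin (2*n) ⊕ (Fin n × Bool) → ℝ :=
    Sum.elim (fun _ => 1/(50*(n:ℝ))) (fun j => cond j.2 2 (Real.sqrt 2)) with hal
  have hwtnn : ∀ c, 0 ≤ wt c := by
    rintro (i | j) <;> simp [hwt] <;> positivity
  have hdual : ∀ q : bhmSpace n, ∑ c, wt c * max (al c - dist (pt c) q) 0 ≤ 2 := by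
    intro q
    have hdem := demand n hn x e hinj q
    rw [Fintype.sum_sum_type]
    simp only [hpt, hwt, hal, Sum.elim_inl, Sum.elim_inr, one_mul]
    rw [Fintype.sum_prod_type]
    simp only [Fintype.sum_bool, cond_true, cond_false]
    have hsw : ∑ k : Fin n, (max ((2:ℝ) - dist (bpt n x e k) q) 0
          + max (Real.sqrt 2 - dist (gpt n x e k) q) 0)
        = ∑ k : Fin n, (max (Real.sqrt 2 - dist (gpt n x e k) q) 0
          + max ((2:ℝ) - dist (bpt n x e k) q) 0) :=
      Finset.sum_congr rfl fun k _ => add_comm _ _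
    rw [hsw]
    exact hdem
  have hsum_alpha : ∑ c, wt c * al c = T := by
    rw [Fintype.sum_sum_type]
    simp only [hwt, hal, Sum.elim_inl, Sum.elim_inr, one_mul]
    rw [Fintype.sum_prod_type]
    simp only [Fintype.sum_bool, cond_true, cond_false]
    rw [Finset.sum_const, Finset.sum_const, Finset.card_univ, Finset.card_univ,
      Fintype.card_fin, Fintype.card_fin, nsmul_eq_mul, nsmul_eq_mul, hT]
    push_cast
    field_simp
    ring
  have lower : ∀ F : Finset (bhmSpace n), F.Nonempty → T ≤ bhmCost n x e w 2 F := by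
    intro F hF
    have hd := dual_bound pt wt al hwtnn 2 hdual F hF
    rw [hsum_alpha] at hd
    refine hd.trans (le_of_eq ?_)
    rw [bhmCost_eq n x e w hno 2 F]
    rw [Fintype.sum_sum_type]
    simp only [hpt, hwt, Sum.elim_inl, Sum.elim_inr, one_mul]
    rw [Fintype.sum_prod_type]
    simp only [Fintype.sum_bool, cond_true, cond_false]
    have hsw : ∑ k : Fin n, (Metric.infDist (bpt n x e k) (F : Set (bhmSpace n))
          + Metric.infDist (gpt n x e k) (F : Set (bhmSpace n)))
        = ∑ k : Fin n, (Metric.infDist (gpt n x e k) (F : Set (bhmSpace n))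
          + Metric.infDist (bpt n x e k) (F : Set (bhmSpace n))) :=
      Finset.sum_congr rfl fun k _ => add_comm _ _
    rw [hsw]
  -- upper bound
  have h2npos : 0 < 2*n := by omega
  set F0 : Finset (bhmSpace n) :=
    (Finset.image (fun i => onesPair n i (x i)) Finset.univ)
      ∪ (Finset.image (fun k => bpt n x e k) Finset.univ) with hF0
  have hF0ne : F0.Nonempty :=
    ⟨onesPair n ⟨0, h2npos⟩ (x ⟨0, h2npos⟩),
      Finset.mem_union_left _ (Finset.mem_image_of_mem _ (Finset.mem_univ _))⟩
  have hcardn : F0.card ≤ 3*n := by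
    refine le_trans (Finset.card_union_le _ _) ?_
    have h1 := Finset.card_image_le (s := (Finset.univ : Finset (Fin (2*n))))
      (f := fun i => onesPair n i (x i))
    have h2 := Finset.card_image_le (s := (Finset.univ : Finset (Fin n)))
      (f := fun k => bpt n x e k)
    simp only [Finset.card_univ, Fintype.card_fin] at h1 h2
    omega
  have hupper : bhmCost n x e w 2 F0 ≤ T := by
    rw [bhmCost_eq n x e w hno 2 F0]
    have hheavy : ∀ i : Fin (2*n),
        Metric.infDist (onesPair n i (x i)) (F0 : Set (bhmSpace n)) = 0 := fun i =>
      Metric.infDist_zero_of_mem (Finset.mem_coe.mpr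
        (Finset.mem_union_left _ (Finset.mem_image_of_mem _ (Finset.mem_univ _))))
    have hbadz : ∀ k : Fin n,
        Metric.infDist (bpt n x e k) (F0 : Set (bhmSpace n)) = 0 := fun k =>
      Metric.infDist_zero_of_mem (Finset.mem_coe.mpr
        (Finset.mem_union_right _ (Finset.mem_image_of_mem _ (Finset.mem_univ _))))
    have hgood : ∀ k : Fin n,
        Metric.infDist (gpt n x e k) (F0 : Set (bhmSpace n)) ≤ Real.sqrt 2 := by
      intro k
      have hmem : onesPair n (e k).1 (x (e k).1) ∈ (F0 : Set (bhmSpace n)) :=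
        Finset.mem_coe.mpr
          (Finset.mem_union_left _ (Finset.mem_image_of_mem _ (Finset.mem_univ _)))
      refine le_trans (Metric.infDist_le_dist_of_mem hmem) (le_of_eq ?_)
      show dist (gpt n x e k) _ = _
      unfold gpt
      rw [add_comm, dist_add_self_left, norm_onesPair]
    have e1 : (∑ i, ((100 * n : ℕ) : ℝ)
        * Metric.infDist (onesPair n i (x i)) (F0 : Set (bhmSpace n))) = 0 :=
      Finset.sum_eq_zero fun i _ => by rw [hheavy i, mul_zero]
    have e2 : (∑ k, (Metric.infDist (gpt n x e k) (F0 : Set (bhmSpace n))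
          + Metric.infDist (bpt n x e k) (F0 : Set (bhmSpace n))))
        ≤ (n:ℝ) * Real.sqrt 2 := by
      calc (∑ k, (Metric.infDist (gpt n x e k) (F0 : Set (bhmSpace n))
          + Metric.infDist (bpt n x e k) (F0 : Set (bhmSpace n))))
          ≤ ∑ _k : Fin n, Real.sqrt 2 :=
            Finset.sum_le_sum fun k _ => by
              rw [hbadz k, add_zero]; exact hgood k
        _ = (n:ℝ) * Real.sqrt 2 := by
            rw [Finset.sum_const, Finset.card_univ, Fintype.card_fin, nsmul_eq_mul]
    have e3 : (2:ℝ) * F0.card ≤ 2 * (3*(n:ℝ)) := by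
      have : (F0.card : ℝ) ≤ 3*(n:ℝ) := by exact_mod_cast hcardn
      linarith
    rw [e1, zero_add, hT]
    nlinarith [e2, e3]
  -- conclude
  have hlb : ∀ c ∈ {c : ℝ | ∃ F : Finset (bhmSpace n), F.Nonempty ∧ c = bhmCost n x e w 2 F},
      T ≤ c := by
    rintro c ⟨F, hF, rfl⟩
    exact lower F hF
  have hmem : bhmCost n x e w 2 F0
      ∈ {c : ℝ | ∃ F : Finset (bhmSpace n), F.Nonempty ∧ c = bhmCost n x e w 2 F} :=
    ⟨F0, hF0ne, rfl⟩
  rw [bhmOPT]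
  apply le_antisymm
  · exact le_trans (csInf_le ⟨T, hlb⟩ hmem) hupper
  · exact le_csInf ⟨_, hmem⟩ hlb
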